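/- arXiv:2008.12165 — 2 statements merged into one kernel-verified Lean document; each statement's English description precedes it below -/
import Mathlib

section
/- (Precise form of Remark 3) Let a, n₁,…,n_m be unit-norm vectors in ℝ^d (‖a‖ = ‖nᵢ‖ = 1 for all i, m ≥ 1), and define the negative volume V⁻ = √(det((N−a)ᵀ(N−a))) where N−a is the d×m matrix with columns nᵢ − a, and let d(a, {n₁,…,n_m}) = min_{1≤i≤m} ‖nᵢ − a‖ be the point-to-set distance from the anchor a to the negative set. Then d(a, {n₁,…,n_m}) ≥ V⁻ / 2^{m−1}. In particular, a large negative volume forces a large point-to-set distance between the anchor and its negatives. -/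
open Matrix

/-- The `d × p` matrix whose `i`-th column is the vector `sᵢ ∈ ℝ^d`. -/
def colMatrix (d p : ℕ) (s : Fin p → EuclideanSpace ℝ (Fin d)) :
    Matrix (Fin d) (Fin p) ℝ :=
  Matrix.of fun i j => s j i

open Finset in
/-- Hadamard-type inequality for the Gram determinant. -/
lemma sqrt_det_gram_le_prod (d m : ℕ) (hm : 0 < m) (v : Fin m → EuclideanSpace ℝ (Fin d)) :
    Real.sqrt (((colMatrix d m v)ᵀ * colMatrix d m v).det) ≤ ∏ i, ‖v i‖ := by
  haveI : NeZero m := ⟨hm.ne'⟩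
  set M := colMatrix d m v with hM
  rcases le_or_gt (Mᵀ * M).det 0 with hD | hD
  · rw [Real.sqrt_eq_zero_of_nonpos hD]
    positivity
  · -- the vectors are linearly independent
    have hli : LinearIndependent ℝ v := by
      rw [Fintype.linearIndependent_iff]
      intro c hc
      have h1 : M.mulVec c = 0 := by
        ext i
        have h0 : (∑ j, c j • v j) i = 0 := by rw [hc]; rfl
        rw [show ((∑ j, c j • v j) i) = ∑ j, c j * v j i from by
          induction (Finset.univ : Finset (Fin m)) using Finset.induction with
          | empty => rfl
          | insert _ _ hx ih => simp_all [Finset.sum_insert hx]] at h0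
        simpa [Matrix.mulVec, dotProduct, hM, colMatrix, mul_comm] using h0
      have h2 : (Mᵀ * M).mulVec c = 0 := by
        rw [← Matrix.mulVec_mulVec, h1, Matrix.mulVec_zero]
      have := Matrix.eq_zero_of_mulVec_eq_zero hD.ne' h2
      intro i; exact congrFun this i
    set S := Submodule.span ℝ (Set.range v) with hS
    haveI : FiniteDimensional ℝ S := FiniteDimensional.span_of_finite ℝ (Set.finite_range v)
    have hdim : Module.finrank ℝ S = Fintype.card (Fin m) := by
      rw [Fintype.card_fin, hS, finrank_span_eq_card hli, Fintype.card_fin]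
    set f : Fin m → S := fun i => ⟨v i, Submodule.subset_span (Set.mem_range_self i)⟩ with hf
    set b : OrthonormalBasis (Fin m) ℝ S := @InnerProductSpace.gramSchmidtOrthonormalBasis ℝ S _ _ _ (Fin m) _ _
      (inferInstance : WellFoundedLT (Fin m)) _ _ hdim f with hb
    set A : Matrix (Fin m) (Fin m) ℝ := b.toBasis.toMatrix f with hA
    have hAentry : ∀ i j, A i j = inner ℝ (b i) (f j) := by
      intro i j
      rw [hA, Module.Basis.toMatrix_apply, OrthonormalBasis.coe_toBasis_repr_apply,
        OrthonormalBasis.repr_apply_apply]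
    have hMA : Mᵀ * M = Aᵀ * A := by
      ext j k
      have lhs : (Mᵀ * M) j k = (inner ℝ (f j) (f k) : ℝ) := by
        simp only [Matrix.mul_apply, Matrix.transpose_apply, hM, colMatrix, Matrix.of_apply]
        rw [Submodule.coe_inner]
        simp [PiLp.inner_apply, RCLike.inner_apply, mul_comm]
        rfl
      have rhs : (Aᵀ * A) j k = (inner ℝ (f j) (f k) : ℝ) := by
        simp only [Matrix.mul_apply, Matrix.transpose_apply]
        rw [← b.sum_inner_mul_inner (f j) (f k)]
        congr 1; ext i
        rw [hAentry i j, hAentry i k, real_inner_comm (b i) (f j)]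
      rw [lhs, rhs]
    rw [hMA, Matrix.det_mul, Matrix.det_transpose, ← sq, Real.sqrt_sq_eq_abs]
    have hdet : A.det = ∏ i, (inner ℝ (b i) (f i) : ℝ) := by
      rw [hA, ← Module.Basis.det_apply]
      exact @InnerProductSpace.gramSchmidtOrthonormalBasis_det ℝ S _ _ _ (Fin m) _ _
        (inferInstance : WellFoundedLT (Fin m)) _ _ hdim f _
    rw [hdet, Finset.abs_prod]
    apply Finset.prod_le_prod (fun i _ => abs_nonneg _)
    intro i _
    calc |(inner ℝ (b i) (f i) : ℝ)| ≤ ‖b i‖ * ‖f i‖ := abs_real_inner_le_norm _ _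
      _ = ‖v i‖ := by rw [b.orthonormal.1 i, one_mul]; rfl

/-- Precise form of Remark 3: for unit-norm anchor `a` and unit-norm
negatives `n₁,…,n_m` in `ℝ^d`, the point-to-set distance
`d(a, {n₁,…,n_m}) = minᵢ ‖nᵢ − a‖` satisfies
`d(a, {n₁,…,n_m}) ≥ V⁻ / 2^{m−1}`, where
`V⁻ = √(det ((N−a)ᵀ(N−a)))` is the negative volume. -/
theorem point_to_set_dist_ge_negative_volume_div
    (d m : ℕ) (hm : 0 < m)
    (a : EuclideanSpace ℝ (Fin d)) (n : Fin m → EuclideanSpace ℝ (Fin d))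
    (ha : ‖a‖ = 1) (hn : ∀ i, ‖n i‖ = 1) :
    (Finset.univ.inf' ⟨⟨0, hm⟩, Finset.mem_univ _⟩ fun i => ‖n i - a‖) ≥
      Real.sqrt (((colMatrix d m (fun i => n i - a))ᵀ *
        colMatrix d m (fun i => n i - a)).det) / 2 ^ (m - 1) := by
  have key := sqrt_det_gram_le_prod d m hm (fun i => n i - a)
  obtain ⟨i₀, -, hi₀⟩ := Finset.exists_mem_eq_inf' ⟨⟨0, hm⟩, Finset.mem_univ _⟩
    (fun i => ‖n i - a‖)
  have hbound : ∀ i, ‖n i - a‖ ≤ 2 := by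
    intro i
    calc ‖n i - a‖ ≤ ‖n i‖ + ‖a‖ := norm_sub_le _ _
      _ = 2 := by rw [hn i, ha]; norm_num
  have hprod : (∏ i, ‖n i - a‖) ≤ ‖n i₀ - a‖ * 2 ^ (m - 1) := by
    rw [← Finset.prod_erase_mul _ _ (Finset.mem_univ i₀), mul_comm]
    apply mul_le_mul_of_nonneg_left _ (norm_nonneg _)
    calc ∏ i ∈ Finset.univ.erase i₀, ‖n i - a‖
        ≤ ∏ i ∈ Finset.univ.erase i₀, (2:ℝ) :=
          Finset.prod_le_prod (fun i _ => norm_nonneg _) (fun i _ => hbound i)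
      _ = 2 ^ (m - 1) := by
          rw [Finset.prod_const, Finset.card_erase_of_mem (Finset.mem_univ _),
            Finset.card_univ, Fintype.card_fin]
  rw [ge_iff_le, div_le_iff₀ (by positivity), hi₀]
  exact key.trans hprod
end

section
/- (Precise form of Remark 1) Let M be a real symmetric positive semidefinite d×d matrix, let r ≤ d, and let λ₁ ≥ λ₂ ≥ … ≥ λ_d ≥ 0 be the eigenvalues of M in decreasing order. Then the maximum of det(Qᵀ·M·Q) over all real d×r matrices Q with QᵀQ = I_r equals ∏_{i=1}^r λᵢ, the product of the r largest eigenvalues of M: for every such Q, det(QᵀMQ) ≤ ∏_{i=1}^r λᵢ, and there exists such a Q attaining equality. -/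
open Matrix Finset

namespace RemarkOne

variable {r d : ℕ}

/-- i ≤ g i for strict mono g on Fin. -/
lemma le_apply_of_strictMono {g : Fin r → Fin d} (hg : StrictMono g) (i : Fin r) :
    (i : ℕ) ≤ (g i : ℕ) := by
  induction' hn : (i : ℕ) with n ih generalizing i
  · exact Nat.zero_le _
  · have hlt : n < r := by omega
    have h1 : (⟨n, hlt⟩ : Fin r) < i := by
      simp [Fin.lt_def, hn]
    have := hg h1
    have := ih ⟨n, hlt⟩ rfl
    simp [Fin.lt_def] at this ⊢
    omega

lemma perm_eq_refl_of_strictMono {σ : Equiv.Perm (Fin r)} (hσ : StrictMono σ) :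
    σ = Equiv.refl (Fin r) := by
  have hinv : StrictMono ⇑σ.symm := fun i j hij => by
    rw [← σ.apply_symm_apply i, ← σ.apply_symm_apply j] at hij
    exact (hσ.lt_iff_lt).mp hij
  ext i
  have h1 : (i : ℕ) ≤ (σ i : ℕ) := le_apply_of_strictMono hσ i
  have h2 : ((σ i : Fin r) : ℕ) ≤ (σ.symm (σ i) : ℕ) := le_apply_of_strictMono hinv (σ i)
  rw [Equiv.symm_apply_apply] at h2
  simp only [Equiv.refl_apply]
  omega

/-- Expansion of the determinant of a product of rectangular matrices. -/
lemma det_mul_expand (A : Matrix (Fin r) (Fin d) ℝ) (B : Matrix (Fin d) (Fin r) ℝ) :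
    det (A * B) = ∑ p : Fin r → Fin d, (∏ i, B (p i) i) * det (A.submatrix id p) :=
  calc det (A * B) = ∑ p : Fin r → Fin d, ∑ σ : Equiv.Perm (Fin r),
        ((Equiv.Perm.sign σ : ℤ) : ℝ) * ∏ i, A (σ i) (p i) * B (p i) i := by
        simp only [det_apply', mul_apply, Finset.prod_univ_sum, Finset.mul_sum,
          Fintype.piFinset_univ]
        rw [Finset.sum_comm]
    _ = ∑ p : Fin r → Fin d, (∏ i, B (p i) i) * det (A.submatrix id p) := by
        refine Finset.sum_congr rfl fun p _ => ?_
        rw [det_apply', Finset.mul_sum]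
        refine Finset.sum_congr rfl fun σ _ => ?_
        simp only [submatrix_apply, id_eq]
        rw [Finset.prod_mul_distrib]
        ring

/-- Cauchy–Binet formula. -/
lemma cauchyBinet (A : Matrix (Fin r) (Fin d) ℝ) (B : Matrix (Fin d) (Fin r) ℝ) :
    det (A * B) = ∑ g ∈ univ.filter (fun g : Fin r → Fin d => StrictMono g),
      det (A.submatrix id g) * det (B.submatrix g id) := by
  rw [det_mul_expand]
  have hstep1 : ∑ p : Fin r → Fin d, (∏ i, B (p i) i) * det (A.submatrix id p)
      = ∑ p ∈ univ.filter (fun p : Fin r → Fin d => Function.Injective p),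
          (∏ i, B (p i) i) * det (A.submatrix id p) := by
    refine (Finset.sum_subset (Finset.filter_subset _ _) fun p _ hp => ?_).symm
    have hni : ¬ Function.Injective p := by simpa using hp
    rw [Function.Injective] at hni
    push_neg at hni
    obtain ⟨i, j, hpij, hne⟩ := hni
    rw [det_zero_of_column_eq hne fun k => by simp [hpij], mul_zero]
  rw [hstep1]
  have hstep2 : ∑ p ∈ univ.filter (fun p : Fin r → Fin d => Function.Injective p),
      (∏ i, B (p i) i) * det (A.submatrix id p)
      = ∑ x ∈ (univ.filter (fun g : Fin r → Fin d => StrictMono g)) ×ˢ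
          (univ : Finset (Equiv.Perm (Fin r))),
          (∏ i, B (x.1 (x.2 i)) i) * det (A.submatrix id (x.1 ∘ x.2)) := by
    refine Finset.sum_nbij' (i := fun p => (p ∘ Tuple.sort p, (Tuple.sort p)⁻¹))
      (j := fun x => x.1 ∘ x.2) ?_ ?_ ?_ ?_ ?_
    · intro p hp
      have hpinj : Function.Injective p := by simpa using hp
      refine Finset.mem_product.mpr ⟨Finset.mem_filter.mpr ⟨Finset.mem_univ _, ?_⟩,
        Finset.mem_univ _⟩
      exact (Tuple.monotone_sort p).strictMono_of_injective
        (hpinj.comp (Tuple.sort p).injective)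
    · intro x hx
      have hgs : StrictMono x.1 := (Finset.mem_filter.mp (Finset.mem_product.mp hx).1).2
      simp only [Finset.mem_filter, Finset.mem_univ, true_and]
      exact hgs.injective.comp x.2.injective
    · intro p hp
      funext k
      simp [Function.comp_apply]
    · intro x hx
      have hgs : StrictMono x.1 := (Finset.mem_filter.mp (Finset.mem_product.mp hx).1).2
      have hτ : Tuple.sort (x.1 ∘ x.2) = x.2⁻¹ := by
        set τ := Tuple.sort (x.1 ∘ x.2) with hτdef
        have hmonot : Monotone ((x.1 ∘ x.2) ∘ τ) := Tuple.monotone_sort _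
        have hinj : Function.Injective ((x.1 ∘ x.2) ∘ τ) :=
          (hgs.injective.comp x.2.injective).comp τ.injective
        have hsm : StrictMono ((x.1 ∘ x.2) ∘ τ) := hmonot.strictMono_of_injective hinj
        have hsm2 : StrictMono ⇑(x.2 * τ) := by
          intro a b hab
          have : x.1 ((x.2 * τ) a) < x.1 ((x.2 * τ) b) := hsm hab
          exact hgs.lt_iff_lt.mp this
        have := perm_eq_refl_of_strictMono hsm2
        have h2 : x.2 * τ = 1 := by
          exact this
        calc τ = x.2⁻¹ * (x.2 * τ) := by group
          _ = x.2⁻¹ := by rw [h2]; group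
      refine Prod.ext ?_ ?_
      · show (x.1 ∘ x.2) ∘ Tuple.sort (x.1 ∘ x.2) = x.1
        rw [hτ]
        funext k
        simp [Function.comp_apply]
      · show (Tuple.sort (x.1 ∘ x.2))⁻¹ = x.2
        rw [hτ]; group
    · intro p hp
      have hc : (p ∘ Tuple.sort p) ∘ ⇑(Tuple.sort p)⁻¹ = p := by
        funext k; simp [Function.comp_apply]
      simp only []
      rw [hc]
      refine congrArg (· * det (A.submatrix id p)) ?_
      refine Finset.prod_congr rfl fun i _ => ?_
      simp [Function.comp_apply]
  rw [hstep2, Finset.sum_product]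
  refine Finset.sum_congr rfl fun g hg => ?_
  have hexp : ∀ σ : Equiv.Perm (Fin r), det (A.submatrix id (g ∘ σ))
      = ((Equiv.Perm.sign σ : ℤ) : ℝ) * det (A.submatrix id g) := by
    intro σ
    have : A.submatrix id (g ∘ ⇑σ) = (A.submatrix id g).submatrix id ⇑σ := by
      rw [submatrix_submatrix]
      rfl
    rw [this, det_permute']
  calc ∑ σ : Equiv.Perm (Fin r), (∏ i, B (g (σ i)) i) * det (A.submatrix id (g ∘ σ))
      = det (A.submatrix id g) * ∑ σ : Equiv.Perm (Fin r),
          ((Equiv.Perm.sign σ : ℤ) : ℝ) * ∏ i, (B.submatrix g id) (σ i) i := by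
        rw [Finset.mul_sum]
        refine Finset.sum_congr rfl fun σ _ => ?_
        rw [hexp σ]
        simp only [submatrix_apply, id_eq]
        ring
    _ = det (A.submatrix id g) * det (B.submatrix g id) := by rw [← det_apply']

/-- Charpoly is invariant under orthogonal conjugation. -/
lemma charpoly_conj (U A : Matrix (Fin d) (Fin d) ℝ) (h : Uᵀ * U = 1) :
    (U * A * Uᵀ).charpoly = A.charpoly := by
  have h' : U * Uᵀ = 1 := mul_eq_one_comm.mp h
  have hone : (U.map Polynomial.C) * (Uᵀ.map Polynomial.C) = 1 := by
    rw [← Matrix.map_mul, h', Matrix.map_one Polynomial.C Polynomial.C_0 Polynomial.C_1]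
  have hc : charmatrix (U * A * Uᵀ) =
      (U.map Polynomial.C) * charmatrix A * (Uᵀ.map Polynomial.C) := by
    unfold charmatrix
    simp only [RingHom.mapMatrix_apply]
    rw [Matrix.mul_sub, Matrix.sub_mul, ← Matrix.map_mul, ← Matrix.map_mul]
    congr 1
    have hcomm := (scalar_commute (n := Fin d) (Polynomial.X : Polynomial ℝ)
      (fun r' => Commute.all _ _) (U.map Polynomial.C)).eq
    rw [← hcomm, Matrix.mul_assoc, hone, Matrix.mul_one]
  unfold Matrix.charpoly
  rw [hc, det_mul, det_mul, mul_right_comm, ← det_mul, hone, det_one, one_mul]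

/-- Spectral decomposition with prescribed (sorted) eigenvalues. -/
lemma exists_orthogonal_diag (M : Matrix (Fin d) (Fin d) ℝ) (hM : M.PosSemidef)
    (lam : Fin d → ℝ) (hmono : Antitone lam)
    (hchar : M.charpoly = ∏ i : Fin d, (Polynomial.X - Polynomial.C (lam i))) :
    ∃ W : Matrix (Fin d) (Fin d) ℝ, Wᵀ * W = 1 ∧ W * Wᵀ = 1 ∧
      M = W * diagonal lam * Wᵀ := by
  classical
  have hHerm : M.IsHermitian := hM.1
  set U : Matrix (Fin d) (Fin d) ℝ := (hHerm.eigenvectorUnitary : Matrix (Fin d) (Fin d) ℝ)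
    with hUdef
  set eig : Fin d → ℝ := hHerm.eigenvalues with heig
  have hsp : M = U * diagonal eig * Uᵀ := by
    have h := hHerm.spectral_theorem
    rw [Unitary.conjStarAlgAut_apply, Matrix.star_eq_conjTranspose, conjTranspose_eq_transpose_of_trivial] at h
    have he : RCLike.ofReal ∘ hHerm.eigenvalues = hHerm.eigenvalues := by
      funext i
      simp [RCLike.ofReal_real_eq_id]
    rw [he] at h
    exact h
  have hUorth : Uᵀ * U = 1 := by
    have h2 : (U : Matrix (Fin d) (Fin d) ℝ) ∈ Matrix.unitaryGroup (Fin d) ℝ :=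
      hHerm.eigenvectorUnitary.2
    rw [Matrix.mem_unitaryGroup_iff'] at h2
    rwa [Matrix.star_eq_conjTranspose, conjTranspose_eq_transpose_of_trivial] at h2
  -- charpoly of M equals that of `diagonal eig`
  have hcp : M.charpoly = ∏ i : Fin d, (Polynomial.X - Polynomial.C (eig i)) := by
    rw [hsp, charpoly_conj U _ hUorth,
      charpoly_of_upperTriangular _ (blockTriangular_diagonal eig)]
    simp
  have h1 : (∏ i : Fin d, (Polynomial.X - Polynomial.C (lam i)))
      = ∏ i : Fin d, (Polynomial.X - Polynomial.C (eig i)) := by rw [← hchar, hcp]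
  have eprod : ∀ f : Fin d → ℝ,
      ((Multiset.map f Finset.univ.val).map (fun a => Polynomial.X - Polynomial.C a)).prod
        = ∏ i : Fin d, (Polynomial.X - Polynomial.C (f i)) := by
    intro f
    rw [Multiset.map_map, Finset.prod_eq_multiset_prod]
    rfl
  have key : Multiset.map lam Finset.univ.val = Multiset.map eig Finset.univ.val := by
    calc Multiset.map lam Finset.univ.val
        = ((Multiset.map lam Finset.univ.val).map
            (fun a => Polynomial.X - Polynomial.C a)).prod.roots := by
          rw [Polynomial.roots_multiset_prod_X_sub_C]
      _ = ((Multiset.map eig Finset.univ.val).map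
            (fun a => Polynomial.X - Polynomial.C a)).prod.roots := by
          rw [eprod, eprod, h1]
      _ = Multiset.map eig Finset.univ.val := by
          rw [Polynomial.roots_multiset_prod_X_sub_C]
  -- find a permutation sorting the eigenvalues into `lam`
  set eig' : Fin d → ℝ := fun i => -eig i with heig'
  set lam' : Fin d → ℝ := fun i => -lam i with hlam'
  set τ : Equiv.Perm (Fin d) := Tuple.sort eig' with hτ
  have hmono' : Monotone lam' := fun a b hab => neg_le_neg (hmono hab)
  have hmonoτ : Monotone (eig' ∘ ⇑τ) := Tuple.monotone_sort eig'
  have hmeq : Multiset.map (eig' ∘ ⇑τ) Finset.univ.val = Multiset.map lam' Finset.univ.val := by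
    calc Multiset.map (eig' ∘ ⇑τ) Finset.univ.val
        = Multiset.map eig' (Multiset.map (⇑τ) Finset.univ.val) := by
          rw [Multiset.map_map]
      _ = Multiset.map eig' Finset.univ.val := by rw [Multiset.map_univ_val_equiv]
      _ = Multiset.map Neg.neg (Multiset.map eig Finset.univ.val) := by
          rw [Multiset.map_map]; rfl
      _ = Multiset.map Neg.neg (Multiset.map lam Finset.univ.val) := by rw [key]
      _ = Multiset.map lam' Finset.univ.val := by rw [Multiset.map_map]; rfl
  have hofn : ∀ f : Fin d → ℝ, (↑(List.ofFn f) : Multiset ℝ) = Multiset.map f Finset.univ.val := by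
    intro f
    rw [List.ofFn_eq_map, Fin.univ_def]
    rfl
  have hlists : List.ofFn (eig' ∘ ⇑τ) = List.ofFn lam' := by
    refine List.Perm.eq_of_sortedLE (hmonoτ.sortedLE_ofFn) (hmono'.sortedLE_ofFn) ?_
    rw [← Multiset.coe_eq_coe, hofn, hofn, hmeq]
  have hfun : eig' ∘ ⇑τ = lam' := List.ofFn_injective hlists
  have hlam : (fun i => eig (τ i)) = lam := by
    funext i
    have := congrFun hfun i
    simp only [Function.comp_apply, heig', hlam'] at this
    linarith
  -- conclude with `W = U.submatrix id τ`
  refine ⟨U.submatrix id ⇑τ, ?_, ?_, ?_⟩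
  · rw [transpose_submatrix]
    have e1 := submatrix_mul Uᵀ U (⇑τ) id (⇑τ) Function.bijective_id
    rw [← e1, hUorth, submatrix_one _ τ.injective]
  · rw [mul_eq_one_comm, transpose_submatrix]
    have e1 := submatrix_mul Uᵀ U (⇑τ) id (⇑τ) Function.bijective_id
    rw [← e1, hUorth, submatrix_one _ τ.injective]
  · have hdiag : diagonal lam = (diagonal eig).submatrix ⇑τ ⇑τ := by
      rw [submatrix_diagonal eig (⇑τ) τ.injective]
      rw [show eig ∘ ⇑τ = lam from funext fun i => congrFun hlam i]
    rw [hdiag, transpose_submatrix, submatrix_mul_equiv, submatrix_mul_equiv, submatrix_id_id,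
      hsp]

end RemarkOne

open RemarkOne

/-- Precise form of Remark 1: let `M` be a real symmetric positive
semidefinite `d × d` matrix with eigenvalues `λ₀ ≥ λ₁ ≥ … ≥ λ_{d-1} ≥ 0`
(listed with multiplicity, i.e. `charpoly M = ∏ᵢ (X − λᵢ)` with `λ`
antitone and nonnegative), and let `r ≤ d`. Then for every real `d × r`
matrix `Q` with `Qᵀ Q = I_r` we have `det (Qᵀ M Q) ≤ ∏_{i < r} λᵢ`, and
some such `Q` attains equality; i.e. the maximum of `det (Qᵀ M Q)` over
isometric embeddings `Q` is the product of the `r` largest eigenvalues. -/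
theorem max_det_compression_eq_prod_top_eigenvalues
    (d r : ℕ) (hr : r ≤ d) (M : Matrix (Fin d) (Fin d) ℝ)
    (hM : M.PosSemidef) (lam : Fin d → ℝ)
    (hmono : Antitone lam) (hnonneg : ∀ i, 0 ≤ lam i)
    (hchar : M.charpoly = ∏ i : Fin d, (Polynomial.X - Polynomial.C (lam i))) :
    (∀ Q : Matrix (Fin d) (Fin r) ℝ, Qᵀ * Q = 1 →
        (Qᵀ * M * Q).det ≤ ∏ i : Fin r, lam (Fin.castLE hr i)) ∧
    (∃ Q : Matrix (Fin d) (Fin r) ℝ, Qᵀ * Q = 1 ∧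
        (Qᵀ * M * Q).det = ∏ i : Fin r, lam (Fin.castLE hr i)) := by
  obtain ⟨W, hWtW, hWWt, hMW⟩ := exists_orthogonal_diag M hM lam hmono hchar
  constructor
  · intro Q hQ
    set P : Matrix (Fin d) (Fin r) ℝ := Wᵀ * Q with hP
    have hPt : Pᵀ = Qᵀ * W := by rw [hP, transpose_mul, transpose_transpose]
    have hPP : Pᵀ * P = 1 := by
      rw [hPt, hP, ← Matrix.mul_assoc, Matrix.mul_assoc Qᵀ W Wᵀ, hWWt, Matrix.mul_one, hQ]
    have key : Qᵀ * M * Q = Pᵀ * (diagonal lam * P) := by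
      rw [hPt, hP, hMW]
      simp only [Matrix.mul_assoc]
    rw [key, cauchyBinet]
    have h1 : ∑ g ∈ univ.filter (fun g : Fin r → Fin d => StrictMono g),
        det (Pᵀ.submatrix id g) * det (P.submatrix g id) = 1 := by
      rw [← cauchyBinet, hPP, det_one]
    have hterm : ∀ g : Fin r → Fin d,
        det (Pᵀ.submatrix id g) * det ((diagonal lam * P).submatrix g id)
          = (∏ i, lam (g i)) * (det (P.submatrix g id) * det (P.submatrix g id)) := by
      intro g
      have e1 : Pᵀ.submatrix id g = (P.submatrix g id)ᵀ := by
        rw [← transpose_submatrix]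
      have e2 : (diagonal lam * P).submatrix g id
          = Matrix.of (fun i j => lam (g i) * (P.submatrix g id) i j) := by
        ext i j
        simp [Matrix.mul_apply, Matrix.diagonal_apply, Finset.mul_sum]
      rw [e1, det_transpose, e2, Matrix.det_mul_column]
      ring
    have hterm2 : ∀ g : Fin r → Fin d, det (Pᵀ.submatrix id g) * det (P.submatrix g id)
        = det (P.submatrix g id) * det (P.submatrix g id) := by
      intro g
      rw [← transpose_submatrix, det_transpose]
    calc ∑ g ∈ univ.filter (fun g : Fin r → Fin d => StrictMono g),
          det (Pᵀ.submatrix id g) * det ((diagonal lam * P).submatrix g id)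
        = ∑ g ∈ univ.filter (fun g : Fin r → Fin d => StrictMono g),
          (∏ i, lam (g i)) * (det (P.submatrix g id) * det (P.submatrix g id)) := by
          exact Finset.sum_congr rfl fun g _ => hterm g
      _ ≤ ∑ g ∈ univ.filter (fun g : Fin r → Fin d => StrictMono g),
          (∏ i : Fin r, lam (Fin.castLE hr i)) *
            (det (P.submatrix g id) * det (P.submatrix g id)) := by
          refine Finset.sum_le_sum fun g hg => ?_
          have hgs : StrictMono g := (Finset.mem_filter.mp hg).2
          refine mul_le_mul_of_nonneg_right ?_ (mul_self_nonneg _)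
          refine Finset.prod_le_prod (fun i _ => hnonneg _) fun i _ => ?_
          exact hmono (by
            have := le_apply_of_strictMono hgs i
            simpa [Fin.le_def] using this)
      _ = (∏ i : Fin r, lam (Fin.castLE hr i)) := by
          rw [← Finset.mul_sum]
          have : ∑ g ∈ univ.filter (fun g : Fin r → Fin d => StrictMono g),
              det (P.submatrix g id) * det (P.submatrix g id) = 1 := by
            rw [← h1]
            exact Finset.sum_congr rfl fun g _ => (hterm2 g).symm
          rw [this, mul_one]
  · have hcinj : Function.Injective (Fin.castLE hr) := (Fin.strictMono_castLE hr).injective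
    have hWMW : Wᵀ * M * W = diagonal lam := by
      rw [hMW]
      calc Wᵀ * (W * diagonal lam * Wᵀ) * W
          = (Wᵀ * W) * diagonal lam * (Wᵀ * W) := by simp only [Matrix.mul_assoc]
        _ = diagonal lam := by rw [hWtW, Matrix.one_mul, Matrix.mul_one]
    refine ⟨W.submatrix id (Fin.castLE hr), ?_, ?_⟩
    · rw [transpose_submatrix]
      have e1 := submatrix_mul Wᵀ W (Fin.castLE hr) id (Fin.castLE hr) Function.bijective_id
      rw [← e1, hWtW, submatrix_one _ hcinj]
    · rw [transpose_submatrix]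
      have e1 := submatrix_mul Wᵀ M (Fin.castLE hr) id (id : Fin d → Fin d)
        Function.bijective_id
      simp only [submatrix_id_id] at e1
      have e2 := submatrix_mul (Wᵀ * M) W (Fin.castLE hr) id (Fin.castLE hr)
        Function.bijective_id
      rw [← e1, ← e2, hWMW, submatrix_diagonal lam _ hcinj, det_diagonal]
      rfl
end
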